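/- Let x ∈ W_{D_n} ⊆ W_{B_n} and suppose t_0 is the unique left descent of x in W_{D_n}, where x = t_0 x' with ℓ_{D}(x') = ℓ_{D}(x) − 1. If s_0 is a left descent of x' in W_{B_n}, then s_1 is not a left descent of s_0 x' in W_{B_n}; consequently ℓ_{B}(s_0 s_1 s_0 x') = ℓ_{B}(s_0 x') + 2. -/

import Mathlib

/-- The group of signed permutations: permutations `w` of `ℤ` with `w (-i) = - w i`
which move only `{-n, …, -1, 1, …, n}`. -/
def signedPermGroup (n : ℕ) : Subgroup (Equiv.Perm ℤ) where
  carrier := {w | (∀ i : ℤ, w (-i) = -(w i)) ∧ ∀ i : ℤ, (n : ℤ) < |i| → w i = i}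
  one_mem' := by constructor <;> intro i <;> simp
  mul_mem' := by
    rintro a b ⟨ha1, ha2⟩ ⟨hb1, hb2⟩
    refine ⟨fun i => ?_, fun i hi => ?_⟩
    · simp [Equiv.Perm.mul_apply, hb1, ha1]
    · have h1 : b i = i := hb2 i hi
      simp [Equiv.Perm.mul_apply, h1, ha2 i hi]
  inv_mem' := by
    rintro a ⟨ha1, ha2⟩
    refine ⟨fun i => ?_, fun i hi => ?_⟩
    · apply a.injective
      rw [show ∀ j, a (a⁻¹ j) = j from a.apply_symm_apply, ha1, show ∀ j, a (a⁻¹ j) = j from a.apply_symm_apply]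
    · apply a.injective
      rw [show ∀ j, a (a⁻¹ j) = j from a.apply_symm_apply, ha2 i hi]

/-- The standard Coxeter generators of type `Bₙ` as signed permutations:
`s 0 = (-1, 1)` and `s i = (i, i+1)(-i, -i-1)`. -/
def sgen : ℕ → Equiv.Perm ℤ := fun i =>
  if i = 0 then Equiv.swap (-1 : ℤ) 1
  else Equiv.swap (i : ℤ) ((i : ℤ) + 1) * Equiv.swap (-(i : ℤ)) (-((i : ℤ) + 1))

/-- The standard Coxeter generators of type `Dₙ`:  `t 0 = s 0 * s 1 * s 0`, `t i = s i`. -/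
def tgen : ℕ → Equiv.Perm ℤ := fun i =>
  if i = 0 then sgen 0 * sgen 1 * sgen 0 else sgen i

/-- Word length of `g` with respect to a generating set `S` (the Coxeter length function
when `S` is the simple system of a Coxeter group). -/
noncomputable def wordLength {G : Type*} [Group G] (S : Set G) (g : G) : ℕ :=
  sInf {k | ∃ l : List G, (∀ x ∈ l, x ∈ S) ∧ l.length = k ∧ l.prod = g}

/-- Number of `i ∈ {1, …, n}` with `w i < 0`. -/
noncomputable def negCount (n : ℕ) (w : Equiv.Perm ℤ) : ℕ :=
  ((Finset.Icc (1 : ℤ) (n : ℤ)).filter (fun i => w i < 0)).card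

theorem Equiv.Perm.apply_inv_self {α : Type*} (f : Equiv.Perm α) (x : α) : f (f⁻¹ x) = x :=
  f.apply_symm_apply x

theorem Equiv.Perm.inv_apply_self {α : Type*} (f : Equiv.Perm α) (x : α) : f⁻¹ (f x) = x :=
  f.symm_apply_apply x

namespace SPaux



open Equiv Finset

lemma sgen_apply0 (i : ℤ) : sgen 0 i = if i = -1 then 1 else if i = 1 then -1 else i := by
  simp only [sgen, reduceIte]
  rw [Equiv.swap_apply_def]

lemma sgen_apply (k : ℕ) (hk : k ≠ 0) (i : ℤ) :
    sgen k i = if i = (k : ℤ) then (k : ℤ) + 1 else if i = (k : ℤ) + 1 then (k : ℤ)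
      else if i = -(k : ℤ) then -((k : ℤ) + 1) else if i = -((k : ℤ) + 1) then -(k : ℤ) else i := by
  have hk1 : 1 ≤ (k : ℤ) := by omega
  simp only [sgen, if_neg hk, Equiv.Perm.mul_apply, Equiv.swap_apply_def]
  split_ifs <;> first | contradiction | omega

lemma sgen_sgen (k : ℕ) (i : ℤ) : sgen k (sgen k i) = i := by
  rcases eq_or_ne k 0 with rfl | hk
  · simp only [sgen_apply0]; split_ifs <;> first | contradiction | omega
  · have hk1 : 1 ≤ (k : ℤ) := by omega
    simp only [sgen_apply k hk]; split_ifs <;> first | contradiction | omega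

lemma sgen_mul_self (k : ℕ) : sgen k * sgen k = 1 := by
  ext i; simp only [Equiv.Perm.mul_apply, Equiv.Perm.one_apply, sgen_sgen]

lemma inv_sgen (k : ℕ) : (sgen k)⁻¹ = sgen k :=
  inv_eq_of_mul_eq_one_right (sgen_mul_self k)

lemma tgen_mul_self (k : ℕ) : tgen k * tgen k = 1 := by
  rcases eq_or_ne k 0 with rfl | hk
  · have h : (tgen 0)⁻¹ = tgen 0 := by
      simp [tgen, mul_inv_rev, inv_sgen, mul_assoc]
    nth_rewrite 2 [← h]
    exact mul_inv_cancel _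
  · simp only [tgen, if_neg hk]; exact sgen_mul_self k

lemma inv_tgen (k : ℕ) : (tgen k)⁻¹ = tgen k :=
  inv_eq_of_mul_eq_one_right (tgen_mul_self k)

lemma tgen_apply0 (i : ℤ) :
    tgen 0 i = if i = 1 then -2 else if i = 2 then -1 else if i = -1 then 2
      else if i = -2 then 1 else i := by
  have h1 : (1 : ℕ) ≠ 0 := one_ne_zero
  simp only [tgen, reduceIte, Equiv.Perm.mul_apply, sgen_apply0, sgen_apply 1 h1]
  push_cast
  split_ifs <;> first | contradiction | omega

lemma sgen_mem {n : ℕ} {k : ℕ} (hk : k < n) : sgen k ∈ signedPermGroup n := by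
  constructor
  · intro i
    rcases eq_or_ne k 0 with rfl | h
    · simp only [sgen_apply0]; split_ifs <;> first | contradiction | omega
    · simp only [sgen_apply k h]; split_ifs <;> first | contradiction | omega
  · intro i hi
    rcases lt_abs.mp hi with h' | h'
    · rcases eq_or_ne k 0 with rfl | h
      · simp only [sgen_apply0]; split_ifs <;> first | contradiction | omega
      · simp only [sgen_apply k h]; split_ifs <;> first | contradiction | omega
    · rcases eq_or_ne k 0 with rfl | h
      · simp only [sgen_apply0]; split_ifs <;> first | contradiction | omega
      · simp only [sgen_apply k h]; split_ifs <;> first | contradiction | omega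

lemma tgen_mem {n : ℕ} {k : ℕ} (hk : k < n) (hn : 2 ≤ n) : tgen k ∈ signedPermGroup n := by
  rcases eq_or_ne k 0 with rfl | h
  · simp only [tgen, reduceIte]
    exact mul_mem (mul_mem (sgen_mem (by omega)) (sgen_mem (by omega))) (sgen_mem (by omega))
  · simp only [tgen, if_neg h]; exact sgen_mem hk



open Equiv Finset

variable {n : ℕ} {w : Equiv.Perm ℤ}

lemma mem_spg {n : ℕ} {w : Equiv.Perm ℤ} : w ∈ signedPermGroup n ↔
    (∀ i : ℤ, w (-i) = -(w i)) ∧ (∀ i : ℤ, (n : ℤ) < |i| → w i = i) := Iff.rfl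

lemma apply_zero (hw : w ∈ signedPermGroup n) : w 0 = 0 := by
  have := hw.1 0; simp at this; omega

lemma apply_ne_zero (hw : w ∈ signedPermGroup n) {i : ℤ} (hi : i ≠ 0) : w i ≠ 0 := by
  intro h
  exact hi (w.injective (h.trans (apply_zero hw).symm))

lemma abs_apply_le (hw : w ∈ signedPermGroup n) {i : ℤ} (h1 : 1 ≤ i) (h2 : i ≤ (n : ℤ)) :
    |w i| ≤ (n : ℤ) := by
  by_contra h
  push_neg at h
  have := ((signedPermGroup n).inv_mem hw).2 (w i) h
  rw [Equiv.Perm.inv_apply_self] at this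
  rw [← this] at h
  rcases lt_abs.mp h with h' | h' <;> omega

lemma sum_ne_zero (hw : w ∈ signedPermGroup n) {i j : ℤ} (hij : i ≠ -j) : w i + w j ≠ 0 := by
  intro h
  have : w i = w (-j) := by rw [hw.1]; omega
  exact hij (w.injective this)

def cD (a b : ℤ) : ℕ := (if b < a then 1 else 0) + (if a + b < 0 then 1 else 0)

noncomputable def sq (n : ℕ) : Finset (ℤ × ℤ) := Finset.Icc 1 (n : ℤ) ×ˢ Finset.Icc 1 (n : ℤ)

noncomputable def phiD (n : ℕ) (w : Equiv.Perm ℤ) : ℕ :=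
  ∑ p ∈ sq n, if p.1 < p.2 then cD (w p.1) (w p.2) else 0

noncomputable def phiB (n : ℕ) (w : Equiv.Perm ℤ) : ℕ := phiD n w + negCount n w

lemma cD_neg_left (a b : ℤ) : cD (-a) b = cD a b := by
  unfold cD; split_ifs <;> omega

lemma cD_swap_lt {a b : ℤ} (h : a < b) : cD b a = cD a b + 1 := by
  unfold cD; split_ifs <;> omega

lemma mem_sq {p : ℤ × ℤ} : p ∈ sq n ↔ 1 ≤ p.1 ∧ p.1 ≤ (n : ℤ) ∧ 1 ≤ p.2 ∧ p.2 ≤ (n : ℤ) := by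
  simp [sq, Finset.mem_Icc]; tauto

lemma phiD_one : phiD n 1 = 0 := by
  apply Finset.sum_eq_zero
  intro p hp
  rw [mem_sq] at hp
  simp only [Equiv.Perm.one_apply]
  split_ifs
  · unfold cD; split_ifs <;> omega
  · rfl

lemma negCount_one : negCount n 1 = 0 := by
  rw [negCount, Finset.card_eq_zero, Finset.filter_eq_empty_iff]
  intro i hi
  simp only [Finset.mem_Icc] at hi
  simp; omega

/-- `phiD` is unchanged by right multiplication by `sgen 0`. -/
lemma phiD_mul_s0 (hw : w ∈ signedPermGroup n) : phiD n (w * sgen 0) = phiD n w := by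
  apply Finset.sum_congr rfl
  intro p hp
  rw [mem_sq] at hp
  split_ifs with h
  · rcases eq_or_ne p.1 1 with h1 | h1
    · have h2 : (2 : ℤ) ≤ p.2 := by omega
      have e1 : (w * sgen 0) p.1 = -(w 1) := by
        rw [h1, Equiv.Perm.mul_apply, sgen_apply0, ← hw.1 1]
        norm_num
      have e2 : (w * sgen 0) p.2 = w p.2 := by
        rw [Equiv.Perm.mul_apply, sgen_apply0]
        split_ifs <;> first | omega | rfl
      rw [e1, e2, h1, cD_neg_left]
    · have e1 : (w * sgen 0) p.1 = w p.1 := by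
        rw [Equiv.Perm.mul_apply, sgen_apply0]
        split_ifs <;> first | omega | rfl
      have e2 : (w * sgen 0) p.2 = w p.2 := by
        rw [Equiv.Perm.mul_apply, sgen_apply0]
        split_ifs <;> first | omega | rfl
      rw [e1, e2]
  · rfl

lemma negCount_split (hn : 1 ≤ n) (u : Equiv.Perm ℤ) :
    negCount n u = (if u 1 < 0 then 1 else 0) +
      ((Finset.Icc (2 : ℤ) (n : ℤ)).filter (fun i => u i < 0)).card := by
  have hsplit : Finset.Icc (1 : ℤ) (n : ℤ) = insert 1 (Finset.Icc 2 (n : ℤ)) := by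
    ext i; simp only [Finset.mem_Icc, Finset.mem_insert]; omega
  rw [negCount, hsplit, Finset.filter_insert]
  split_ifs with h
  · rw [Finset.card_insert_of_notMem (by
      intro hmem
      have := Finset.mem_of_mem_filter _ hmem
      simp [Finset.mem_Icc] at this)]
    omega
  · omega

lemma negCount_mul_s0 (hw : w ∈ signedPermGroup n) (hn : 1 ≤ n) :
    (0 < w 1 → negCount n (w * sgen 0) = negCount n w + 1) ∧
    (w 1 < 0 → negCount n (w * sgen 0) + 1 = negCount n w) := by
  have e1 : (w * sgen 0) 1 = -(w 1) := by
    rw [Equiv.Perm.mul_apply, sgen_apply0, ← hw.1 1]; norm_num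
  have etail : ((Finset.Icc (2 : ℤ) (n : ℤ)).filter (fun i => (w * sgen 0) i < 0)).card =
      ((Finset.Icc (2 : ℤ) (n : ℤ)).filter (fun i => w i < 0)).card := by
    congr 1
    apply Finset.filter_congr
    intro a ha
    simp only [Finset.mem_Icc] at ha
    have : (w * sgen 0) a = w a := by
      rw [Equiv.Perm.mul_apply, sgen_apply0]; split_ifs <;> first | omega | rfl
    rw [this]
  rw [negCount_split hn (w * sgen 0), negCount_split hn w, e1, etail]
  constructor <;> intro h <;> split_ifs <;> omega


lemma sgen_pos_sign (k : ℕ) (hk : k ≠ 0) {i : ℤ} : sgen k i < 0 ↔ i < 0 := by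
  have hk1 : 1 ≤ (k : ℤ) := by omega
  rw [sgen_apply k hk]; split_ifs <;> omega

lemma sgen_mem_Icc {n k : ℕ} (hk : k ≠ 0) (hkn : k < n) {i : ℤ}
    (hi : i ∈ Finset.Icc (1 : ℤ) (n : ℤ)) : sgen k i ∈ Finset.Icc (1 : ℤ) (n : ℤ) := by
  simp only [Finset.mem_Icc] at hi ⊢
  have hk1 : 1 ≤ (k : ℤ) := by omega
  have hkn' : (k : ℤ) < n := by omega
  rw [sgen_apply k hk]; split_ifs <;> omega

lemma sgen_lt_iff (k : ℕ) (hk : k ≠ 0) {a b : ℤ} (ha : 1 ≤ a) (hb : 1 ≤ b)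
    (h1 : ¬(a = (k : ℤ) ∧ b = (k : ℤ) + 1)) (h2 : ¬(a = (k : ℤ) + 1 ∧ b = (k : ℤ))) :
    (sgen k a < sgen k b ↔ a < b) := by
  have hk1 : 1 ≤ (k : ℤ) := by omega
  rw [not_and_or] at h1 h2
  rw [sgen_apply k hk, sgen_apply k hk]
  split_ifs <;> omega

/-- Change of `phiD` under right multiplication by `sgen k`, `k ≥ 1`. -/
lemma phiD_mul_sgen (hw : w ∈ signedPermGroup n) {k : ℕ} (hk : k ≠ 0) (hkn : k < n) :
    (w (k : ℤ) < w ((k : ℤ) + 1) → phiD n (w * sgen k) = phiD n w + 1) ∧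
    (w ((k : ℤ) + 1) < w (k : ℤ) → phiD n (w * sgen k) + 1 = phiD n w) := by
  have hk1 : 1 ≤ (k : ℤ) := by omega
  have hkn' : (k : ℤ) + 1 ≤ (n : ℤ) := by omega
  have hσσ : ∀ i : ℤ, sgen k (sgen k i) = i := sgen_sgen k
  -- Step A: reindex
  have stepA : phiD n (w * sgen k) =
      ∑ p ∈ sq n, if sgen k p.1 < sgen k p.2 then cD (w p.1) (w p.2) else 0 := by
    rw [phiD]
    refine Finset.sum_bij' (fun p _ => (sgen k p.1, sgen k p.2))
      (fun p _ => (sgen k p.1, sgen k p.2)) ?_ ?_ ?_ ?_ ?_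
    · intro p hp
      rw [mem_sq] at hp ⊢
      have m1 := sgen_mem_Icc hk hkn (i := p.1) (by simp [Finset.mem_Icc]; omega)
      have m2 := sgen_mem_Icc hk hkn (i := p.2) (by simp [Finset.mem_Icc]; omega)
      simp only [Finset.mem_Icc] at m1 m2
      exact ⟨m1.1, m1.2, m2.1, m2.2⟩
    · intro p hp
      rw [mem_sq] at hp ⊢
      have m1 := sgen_mem_Icc hk hkn (i := p.1) (by simp [Finset.mem_Icc]; omega)
      have m2 := sgen_mem_Icc hk hkn (i := p.2) (by simp [Finset.mem_Icc]; omega)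
      simp only [Finset.mem_Icc] at m1 m2
      exact ⟨m1.1, m1.2, m2.1, m2.2⟩
    · intro p _; simp [hσσ]
    · intro p _; simp [hσσ]
    · intro p _
      simp only [Equiv.Perm.mul_apply, hσσ]
  -- Step B: split off the two special pairs
  have hpair : (((k : ℤ), (k : ℤ) + 1) : ℤ × ℤ) ≠ (((k : ℤ) + 1, (k : ℤ)) : ℤ × ℤ) := by
    intro h; rw [Prod.ext_iff] at h; omega
  set T : Finset (ℤ × ℤ) := {((k : ℤ), (k : ℤ) + 1), ((k : ℤ) + 1, (k : ℤ))} with hT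
  have hTsub : T ⊆ sq n := by
    intro p hp
    rw [hT] at hp
    simp only [Finset.mem_insert, Finset.mem_singleton] at hp
    rw [mem_sq]
    rcases hp with rfl | rfl <;> constructor <;> simp <;> omega
  have hsum1 := Finset.sum_sdiff (f := fun p : ℤ × ℤ =>
    if sgen k p.1 < sgen k p.2 then cD (w p.1) (w p.2) else 0) hTsub
  have hsum2 := Finset.sum_sdiff (f := fun p : ℤ × ℤ =>
    if p.1 < p.2 then cD (w p.1) (w p.2) else 0) hTsub
  have hmid : ∀ p ∈ sq n \ T,
      (if sgen k p.1 < sgen k p.2 then cD (w p.1) (w p.2) else 0) =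
      (if p.1 < p.2 then cD (w p.1) (w p.2) else 0) := by
    intro p hp
    rw [Finset.mem_sdiff, hT] at hp
    simp only [Finset.mem_insert, Finset.mem_singleton] at hp
    have hpb := hp.1
    rw [mem_sq] at hpb
    have h1 : ¬(p.1 = (k : ℤ) ∧ p.2 = (k : ℤ) + 1) := by
      intro h; exact hp.2 (Or.inl (Prod.ext_iff.mpr h))
    have h2 : ¬(p.1 = (k : ℤ) + 1 ∧ p.2 = (k : ℤ)) := by
      intro h; exact hp.2 (Or.inr (Prod.ext_iff.mpr h))
    simp only [sgen_lt_iff k hk hpb.1 hpb.2.2.1 h1 h2]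
  have hmid' : ∑ p ∈ sq n \ T, (if sgen k p.1 < sgen k p.2 then cD (w p.1) (w p.2) else 0) =
      ∑ p ∈ sq n \ T, (if p.1 < p.2 then cD (w p.1) (w p.2) else 0) :=
    Finset.sum_congr rfl hmid
  have hsk : sgen k (k : ℤ) = (k : ℤ) + 1 := by
    rw [sgen_apply k hk]; split_ifs <;> first | contradiction | omega
  have hsk1 : sgen k ((k : ℤ) + 1) = (k : ℤ) := by
    rw [sgen_apply k hk]; split_ifs <;> first | contradiction | omega
  have hTg : ∑ p ∈ T, (if sgen k p.1 < sgen k p.2 then cD (w p.1) (w p.2) else 0) =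
      cD (w ((k : ℤ) + 1)) (w (k : ℤ)) := by
    rw [hT, Finset.sum_pair hpair]
    simp only [hsk, hsk1]
    rw [if_neg (by omega), if_pos (by omega)]
    omega
  have hTf : ∑ p ∈ T, (if p.1 < p.2 then cD (w p.1) (w p.2) else 0) =
      cD (w (k : ℤ)) (w ((k : ℤ) + 1)) := by
    rw [hT, Finset.sum_pair hpair]
    simp only []
    rw [if_pos (by omega), if_neg (by omega)]
    omega
  have key1 : phiD n (w * sgen k) =
      (∑ p ∈ sq n \ T, if p.1 < p.2 then cD (w p.1) (w p.2) else 0) +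
        cD (w ((k : ℤ) + 1)) (w (k : ℤ)) := by
    rw [stepA, ← hsum1, hmid', hTg]
  have key2 : phiD n w =
      (∑ p ∈ sq n \ T, if p.1 < p.2 then cD (w p.1) (w p.2) else 0) +
        cD (w (k : ℤ)) (w ((k : ℤ) + 1)) := by
    rw [phiD, ← hsum2, hTf]
  constructor
  · intro h
    rw [key1, key2, cD_swap_lt h]
    omega
  · intro h
    rw [key1, key2, cD_swap_lt h]
    omega

lemma negCount_mul_sgen {k : ℕ} (hk : k ≠ 0) (hkn : k < n) :
    negCount n (w * sgen k) = negCount n w := by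
  rw [negCount, negCount]
  apply Finset.card_bij' (fun a _ => sgen k a) (fun a _ => sgen k a)
  · intro a ha
    simp only [Finset.mem_filter] at ha ⊢
    refine ⟨sgen_mem_Icc hk hkn ha.1, ?_⟩
    have := ha.2
    rw [Equiv.Perm.mul_apply] at this
    exact this
  · intro a ha
    simp only [Finset.mem_filter] at ha ⊢
    refine ⟨sgen_mem_Icc hk hkn ha.1, ?_⟩
    rw [Equiv.Perm.mul_apply, sgen_sgen]
    exact ha.2
  · intro a _; exact sgen_sgen k a
  · intro a _; exact sgen_sgen k a

/-- Change of `phiB` under right multiplication by `sgen k`, `k ≥ 1`. -/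
lemma phiB_mul_sgen (hw : w ∈ signedPermGroup n) {k : ℕ} (hk : k ≠ 0) (hkn : k < n) :
    (w (k : ℤ) < w ((k : ℤ) + 1) → phiB n (w * sgen k) = phiB n w + 1) ∧
    (w ((k : ℤ) + 1) < w (k : ℤ) → phiB n (w * sgen k) + 1 = phiB n w) := by
  have h1 := phiD_mul_sgen hw hk hkn
  have h2 := negCount_mul_sgen (w := w) hk hkn
  unfold phiB
  constructor <;> intro h
  · rw [h1.1 h, h2]; omega
  · rw [h2]; have := h1.2 h; omega

/-- Change of `phiB` under right multiplication by `sgen 0`. -/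
lemma phiB_mul_s0 (hw : w ∈ signedPermGroup n) (hn : 1 ≤ n) :
    (0 < w 1 → phiB n (w * sgen 0) = phiB n w + 1) ∧
    (w 1 < 0 → phiB n (w * sgen 0) + 1 = phiB n w) := by
  have h1 := phiD_mul_s0 hw
  have h2 := negCount_mul_s0 hw hn
  unfold phiB
  constructor <;> intro h
  · rw [h1, h2.1 h]; omega
  · rw [h1]; have := h2.2 h; omega

/-- Change of `phiD` under right multiplication by `tgen 0 = s0 s1 s0`. -/
lemma phiD_mul_t0 (hw : w ∈ signedPermGroup n) (hn : 2 ≤ n) :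
    (0 < w 1 + w 2 → phiD n (w * tgen 0) = phiD n w + 1) ∧
    (w 1 + w 2 < 0 → phiD n (w * tgen 0) + 1 = phiD n w) := by
  have hmem0 : sgen 0 ∈ signedPermGroup n := sgen_mem (by omega)
  have hmem1 : sgen 1 ∈ signedPermGroup n := sgen_mem (by omega)
  have hu : w * sgen 0 ∈ signedPermGroup n := mul_mem hw hmem0
  have hus : (w * sgen 0) * sgen 1 ∈ signedPermGroup n := mul_mem hu hmem1
  have hexp : w * tgen 0 = ((w * sgen 0) * sgen 1) * sgen 0 := by
    simp [tgen, mul_assoc]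
  have e1 : (w * sgen 0) ((1 : ℕ) : ℤ) = -(w 1) := by
    rw [Equiv.Perm.mul_apply, sgen_apply0, ← hw.1 1]; norm_num
  have e2 : (w * sgen 0) (((1 : ℕ) : ℤ) + 1) = w 2 := by
    rw [Equiv.Perm.mul_apply, sgen_apply0]; norm_num
  have h1 := phiD_mul_sgen hu (k := 1) one_ne_zero (by omega)
  rw [e1, e2, phiD_mul_s0 hw] at h1
  have hsum : w 1 + w 2 ≠ 0 := sum_ne_zero hw (by omega)
  rw [hexp, phiD_mul_s0 hus]
  constructor <;> intro h
  · exact h1.1 (by omega)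
  · exact h1.2 (by omega)

lemma incr_le (f : ℤ → ℤ) (n : ℕ) (hpos : ∀ i : ℤ, 1 ≤ i → i ≤ (n : ℤ) → 1 ≤ f i)
    (hincr : ∀ i j : ℤ, 1 ≤ i → i < j → j ≤ (n : ℤ) → f i < f j) :
    ∀ i : ℤ, 1 ≤ i → i ≤ (n : ℤ) → i ≤ f i := by
  intro i hi
  refine Int.le_induction (motive := fun i _ => i ≤ (n : ℤ) → i ≤ f i) ?_ ?_ i hi
  · intro h; exact hpos 1 le_rfl h
  · intro j hj ih hj1
    have h1 := ih (by omega)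
    have h2 := hincr j (j + 1) hj (by omega) hj1
    omega

lemma inv_apply_le (hw : w ∈ signedPermGroup n) {i : ℤ} (h1 : 1 ≤ i) (h2 : i ≤ (n : ℤ)) :
    -(n : ℤ) ≤ w⁻¹ i ∧ w⁻¹ i ≤ (n : ℤ) := by
  have := abs_apply_le ((signedPermGroup n).inv_mem hw) h1 h2
  rcases abs_cases ((w⁻¹ : Equiv.Perm ℤ) i) with ⟨he, _⟩ | ⟨he, _⟩ <;> omega

lemma eq_one_of_incr_pos (hw : w ∈ signedPermGroup n)
    (hpos : ∀ i : ℤ, 1 ≤ i → i ≤ (n : ℤ) → 0 < w i)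
    (hincr : ∀ i j : ℤ, 1 ≤ i → i < j → j ≤ (n : ℤ) → w i < w j) : w = 1 := by
  have hinv := (signedPermGroup n).inv_mem hw
  have hpos' : ∀ i : ℤ, 1 ≤ i → i ≤ (n : ℤ) → 0 < w⁻¹ i := by
    intro i h1 h2
    by_contra h
    push_neg at h
    have hne : (w⁻¹ : Equiv.Perm ℤ) i ≠ 0 := apply_ne_zero hinv (by omega)
    have habs := inv_apply_le hw h1 h2
    have hj1 : 1 ≤ -(w⁻¹ i) := by omega
    have hj2 : -(w⁻¹ i) ≤ (n : ℤ) := by omega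
    have hjpos := hpos (-(w⁻¹ i)) hj1 hj2
    have happ : w (w⁻¹ i) = i := w.apply_inv_self i
    have e := hw.1 (-(w⁻¹ i))
    rw [neg_neg] at e
    omega
  have hincr' : ∀ i j : ℤ, 1 ≤ i → i < j → j ≤ (n : ℤ) → w⁻¹ i < w⁻¹ j := by
    intro i j h1 h2 h3
    rcases lt_trichotomy ((w⁻¹ : Equiv.Perm ℤ) i) (w⁻¹ j) with h | h | h
    · exact h
    · exact absurd ((w⁻¹ : Equiv.Perm ℤ).injective h) (by omega)
    · exfalso
      have hb1 : 1 ≤ (w⁻¹ : Equiv.Perm ℤ) j := hpos' j (by omega) h3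
      have hb2 : (w⁻¹ : Equiv.Perm ℤ) i ≤ (n : ℤ) := (inv_apply_le hw h1 (by omega)).2
      have := hincr (w⁻¹ j) (w⁻¹ i) hb1 h hb2
      rw [Equiv.Perm.apply_inv_self, Equiv.Perm.apply_inv_self] at this
      omega
  have hfix : ∀ i : ℤ, 1 ≤ i → i ≤ (n : ℤ) → w i = i := by
    intro i h1 h2
    have ha := incr_le (⇑w) n (fun i a b => hpos i a b) hincr i h1 h2
    have hb := incr_le (⇑(w⁻¹ : Equiv.Perm ℤ)) n (fun i a b => hpos' i a b) hincr' i h1 h2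
    rcases eq_or_lt_of_le hb with he | hlt
    · conv_lhs => rw [he]
      exact w.apply_inv_self i
    · exfalso
      have hwin : (w⁻¹ : Equiv.Perm ℤ) i ≤ (n : ℤ) := (inv_apply_le hw h1 h2).2
      have := hincr i (w⁻¹ i) h1 hlt hwin
      rw [Equiv.Perm.apply_inv_self] at this
      omega
  ext i
  show w i = i
  rcases le_or_gt i (-1) with hi | hi
  · rcases le_or_gt (-(n : ℤ)) i with hi2 | hi2
    · have e := hw.1 (-i)
      rw [neg_neg] at e
      rw [e, hfix (-i) (by omega) (by omega)]
      omega
    · exact hw.2 i (by rcases abs_cases i with ⟨he, _⟩ | ⟨he, _⟩ <;> omega)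
  · rcases le_or_gt i (n : ℤ) with hi2 | hi2
    · rcases eq_or_lt_of_le (show (0 : ℤ) ≤ i by omega) with he | hlt
      · rw [show i = 0 by omega]; exact apply_zero hw
      · exact hfix i (by omega) hi2
    · exact hw.2 i (by rcases abs_cases i with ⟨he, _⟩ | ⟨he, _⟩ <;> omega)

lemma of_phiD_zero (h : phiD n w = 0) :
    ∀ i j : ℤ, 1 ≤ i → i < j → j ≤ (n : ℤ) → ¬(w j < w i) ∧ ¬(w i + w j < 0) := by
  intro i j h1 h2 h3
  have hm : ((i, j) : ℤ × ℤ) ∈ sq n := by rw [mem_sq]; exact ⟨h1, by omega, by omega, h3⟩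
  have := (Finset.sum_eq_zero_iff.mp h) (i, j) hm
  rw [if_pos (show ((i, j) : ℤ × ℤ).1 < (i, j).2 from h2)] at this
  dsimp only at this
  unfold cD at this
  split_ifs at this <;> constructor <;> omega

lemma negCount_zero_pos (hw : w ∈ signedPermGroup n) (h : negCount n w = 0) :
    ∀ i : ℤ, 1 ≤ i → i ≤ (n : ℤ) → 0 < w i := by
  intro i h1 h2
  have hemp := Finset.filter_eq_empty_iff.mp (Finset.card_eq_zero.mp h)
  have hmem : i ∈ Finset.Icc (1 : ℤ) (n : ℤ) := by simp [Finset.mem_Icc]; omega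
  have h3 := hemp hmem
  have hne : w i ≠ 0 := apply_ne_zero hw (by omega)
  simp only [not_lt] at h3
  omega

lemma phiB_zero_eq_one (hw : w ∈ signedPermGroup n) (h : phiB n w = 0) : w = 1 := by
  unfold phiB at h
  have hD : phiD n w = 0 := by omega
  have hN : negCount n w = 0 := by omega
  have hpos := negCount_zero_pos hw hN
  apply eq_one_of_incr_pos hw hpos
  intro i j h1 h2 h3
  have := (of_phiD_zero hD i j h1 h2 h3).1
  have hne : w i ≠ w j := fun he => absurd (w.injective he) (by omega)
  omega

lemma phiD_zero_eq_one_even (hw : w ∈ signedPermGroup n) (heven : Even (negCount n w))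
    (h : phiD n w = 0) : w = 1 := by
  have hN : negCount n w = 0 := by
    by_contra hN
    have h2 : 2 ≤ negCount n w := by
      rcases heven with ⟨m, hm⟩; omega
    rw [negCount] at h2
    obtain ⟨a, ha, b, hb, hab⟩ := Finset.one_lt_card.mp
      (show 1 < ((Finset.Icc (1 : ℤ) (n : ℤ)).filter (fun i => w i < 0)).card by omega)
    simp only [Finset.mem_filter, Finset.mem_Icc] at ha hb
    rcases lt_or_gt_of_ne hab with hlt | hlt
    · have := (of_phiD_zero h a b (by omega) hlt (by omega)).2
      omega
    · have := (of_phiD_zero h b a (by omega) hlt (by omega)).2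
      omega
  have hpos := negCount_zero_pos hw hN
  apply eq_one_of_incr_pos hw hpos
  intro i j h1 h2 h3
  have := (of_phiD_zero h i j h1 h2 h3).1
  have hne : w i ≠ w j := fun he => absurd (w.injective he) (by omega)
  omega

/-- From adjacent increases to full monotonicity on the window. -/
lemma mono_of_adj (hadj : ∀ i : ℤ, 1 ≤ i → i + 1 ≤ (n : ℤ) → w i < w (i + 1)) :
    ∀ i j : ℤ, 1 ≤ i → i < j → j ≤ (n : ℤ) → w i < w j := by
  intro i j h1 h2 h3
  have : ∀ j : ℤ, i + 1 ≤ j → j ≤ (n : ℤ) → w i < w j := by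
    intro j hj
    refine Int.le_induction (motive := fun j _ => j ≤ (n : ℤ) → w i < w j) ?_ ?_ j hj
    · intro h; exact hadj i h1 h
    · intro m hm ih hm1
      have := hadj m (by omega) hm1
      have := ih (by omega)
      omega
  exact this j (by omega) h3

lemma exists_descent_B (hw : w ∈ signedPermGroup n) (hn : 1 ≤ n) (h0 : phiB n w ≠ 0) :
    ∃ k : ℕ, k < n ∧ phiB n (w * sgen k) + 1 = phiB n w := by
  by_cases hadj : ∃ k : ℕ, k ≠ 0 ∧ k < n ∧ w ((k : ℤ) + 1) < w (k : ℤ)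
  · obtain ⟨k, hk, hkn, hlt⟩ := hadj
    exact ⟨k, hkn, (phiB_mul_sgen hw hk hkn).2 hlt⟩
  · push_neg at hadj
    have hmono : ∀ i j : ℤ, 1 ≤ i → i < j → j ≤ (n : ℤ) → w i < w j := by
      apply mono_of_adj
      intro i h1 h2
      have hk : (i.toNat : ℤ) = i := Int.toNat_of_nonneg (by omega)
      have := hadj i.toNat (by omega) (by omega)
      rw [hk] at this
      have hne : w i ≠ w (i + 1) := fun he => absurd (w.injective he) (by omega)
      omega
    by_cases hneg : w 1 < 0
    · exact ⟨0, by omega, (phiB_mul_s0 hw hn).2 hneg⟩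
    · exfalso
      apply h0
      have h1 : 0 < w 1 := by
        have := apply_ne_zero hw (i := 1) (by omega); omega
      have hpos : ∀ i : ℤ, 1 ≤ i → i ≤ (n : ℤ) → 0 < w i := by
        intro i ha hb
        rcases eq_or_lt_of_le ha with he | hlt
        · rw [← he]; exact h1
        · have := hmono 1 i (by omega) (by omega) hb; omega
      unfold phiB
      have hD : phiD n w = 0 := by
        apply Finset.sum_eq_zero
        intro p hp
        rw [mem_sq] at hp
        split_ifs with hlt
        · have hA := hmono p.1 p.2 hp.1 hlt hp.2.2.2
          have hB1 := hpos p.1 hp.1 hp.2.1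
          have hB2 := hpos p.2 hp.2.2.1 hp.2.2.2
          unfold cD; split_ifs <;> omega
        · rfl
      have hN : negCount n w = 0 := by
        rw [negCount, Finset.card_eq_zero, Finset.filter_eq_empty_iff]
        intro i hi
        simp only [Finset.mem_Icc] at hi
        have := hpos i hi.1 hi.2
        simp; omega
      omega

lemma exists_descent_D (hw : w ∈ signedPermGroup n) (hn : 2 ≤ n) (h0 : phiD n w ≠ 0) :
    ∃ k : ℕ, k < n ∧ phiD n (w * tgen k) + 1 = phiD n w := by
  by_cases hadj : ∃ k : ℕ, k ≠ 0 ∧ k < n ∧ w ((k : ℤ) + 1) < w (k : ℤ)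
  · obtain ⟨k, hk, hkn, hlt⟩ := hadj
    refine ⟨k, hkn, ?_⟩
    rw [show tgen k = sgen k by simp [tgen, hk]]
    exact (phiD_mul_sgen hw hk hkn).2 hlt
  · push_neg at hadj
    have hmono : ∀ i j : ℤ, 1 ≤ i → i < j → j ≤ (n : ℤ) → w i < w j := by
      apply mono_of_adj
      intro i h1 h2
      have hk : (i.toNat : ℤ) = i := Int.toNat_of_nonneg (by omega)
      have := hadj i.toNat (by omega) (by omega)
      rw [hk] at this
      have hne : w i ≠ w (i + 1) := fun he => absurd (w.injective he) (by omega)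
      omega
    by_cases hneg : w 1 + w 2 < 0
    · exact ⟨0, by omega, (phiD_mul_t0 hw hn).2 hneg⟩
    · exfalso
      apply h0
      have hsum : w 1 + w 2 ≠ 0 := sum_ne_zero hw (by omega)
      apply Finset.sum_eq_zero
      intro p hp
      rw [mem_sq] at hp
      split_ifs with hlt
      · have hA := hmono p.1 p.2 hp.1 hlt hp.2.2.2
        have hB1 : w 1 ≤ w p.1 := by
          rcases eq_or_lt_of_le hp.1 with he | hlt2
          · rw [← he]
          · exact le_of_lt (hmono 1 p.1 (by omega) (by omega) hp.2.1)
        have hB2 : w 2 ≤ w p.2 := by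
          rcases eq_or_lt_of_le (show (2 : ℤ) ≤ p.2 by omega) with he | hlt2
          · rw [← he]
          · exact le_of_lt (hmono 2 p.2 (by omega) (by omega) hp.2.2.2)
        unfold cD; split_ifs <;> omega
      · rfl

noncomputable def chi (n : ℕ) (w : Equiv.Perm ℤ) : ℤ :=
  ∏ i ∈ Finset.Icc (1 : ℤ) (n : ℤ), (if w i < 0 then -1 else 1)

lemma chi_eq_pow : chi n w = (-1) ^ (negCount n w) := by
  have h1 : ∏ i ∈ (Finset.Icc (1 : ℤ) (n : ℤ)).filter (fun i => w i < 0),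
      (if w i < 0 then (-1 : ℤ) else 1) = (-1) ^ (negCount n w) := by
    rw [Finset.prod_congr rfl (fun i hi => if_pos (Finset.mem_filter.mp hi).2),
      Finset.prod_const, negCount]
  have h2 : ∏ i ∈ (Finset.Icc (1 : ℤ) (n : ℤ)).filter (fun i => ¬(w i < 0)),
      (if w i < 0 then (-1 : ℤ) else 1) = 1 :=
    Finset.prod_eq_one (fun i hi => if_neg (Finset.mem_filter.mp hi).2)
  rw [chi, ← Finset.prod_filter_mul_prod_filter_not (Finset.Icc (1 : ℤ) (n : ℤ))
    (fun i => w i < 0), h1, h2, mul_one]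

lemma chi_one : chi n 1 = 1 := by
  apply Finset.prod_eq_one
  intro i hi
  simp only [Finset.mem_Icc] at hi
  rw [if_neg]
  simp only [Equiv.Perm.one_apply]
  omega

lemma abs_inv_abs {u : Equiv.Perm ℤ} (hu : u ∈ signedPermGroup n) {i : ℤ} (h1 : 1 ≤ i) :
    abs ((u⁻¹ : Equiv.Perm ℤ) (abs (u i))) = i := by
  have hne : u i ≠ 0 := apply_ne_zero hu (by omega)
  rcases lt_or_gt_of_ne hne with h | h
  · rw [abs_of_neg h]
    have e := ((signedPermGroup n).inv_mem hu).1 (u i)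
    rw [e, Equiv.Perm.inv_apply_self, abs_neg, abs_of_pos (by omega)]
  · rw [abs_of_pos h, Equiv.Perm.inv_apply_self, abs_of_pos (by omega)]

lemma chi_mul {v : Equiv.Perm ℤ} (hv : v ∈ signedPermGroup n) (hw : w ∈ signedPermGroup n) :
    chi n (v * w) = chi n v * chi n w := by
  have key : ∀ i ∈ Finset.Icc (1 : ℤ) (n : ℤ),
      (if (v * w) i < 0 then (-1 : ℤ) else 1) =
      (if w i < 0 then (-1 : ℤ) else 1) * (if v |w i| < 0 then (-1 : ℤ) else 1) := by
    intro i hi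
    simp only [Finset.mem_Icc] at hi
    have hwi : w i ≠ 0 := apply_ne_zero hw (by omega)
    rw [Equiv.Perm.mul_apply]
    rcases lt_or_gt_of_ne hwi with h | h
    · rw [abs_of_neg h]
      have e := hv.1 (-(w i))
      rw [neg_neg] at e
      rw [e]
      have hv0 : v (-(w i)) ≠ 0 := apply_ne_zero hv (by omega)
      rcases lt_or_gt_of_ne hv0 with h2 | h2
      · rw [if_neg (by omega), if_pos h, if_pos h2]; norm_num
      · rw [if_pos (by omega), if_pos h, if_neg (by omega)]; norm_num
    · rw [abs_of_pos h, if_neg (show ¬(w i < 0) by omega), one_mul]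
  have hsnd : (∏ i ∈ Finset.Icc (1 : ℤ) (n : ℤ), if v |w i| < 0 then (-1 : ℤ) else 1) =
      chi n v := by
    rw [chi]
    refine Finset.prod_bij' (fun a _ => |w a|) (fun b _ => |(w⁻¹ : Equiv.Perm ℤ) b|) ?_ ?_ ?_ ?_ ?_
    · intro a ha
      simp only [Finset.mem_Icc] at ha ⊢
      have h1 := abs_apply_le hw ha.1 ha.2
      have h2 : w a ≠ 0 := apply_ne_zero hw (by omega)
      constructor
      · rcases abs_cases (w a) with ⟨he, _⟩ | ⟨he, _⟩ <;> omega
      · exact h1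
    · intro b hb
      simp only [Finset.mem_Icc] at hb ⊢
      have h1 := abs_apply_le ((signedPermGroup n).inv_mem hw) hb.1 hb.2
      have h2 : (w⁻¹ : Equiv.Perm ℤ) b ≠ 0 :=
        apply_ne_zero ((signedPermGroup n).inv_mem hw) (by omega)
      constructor
      · rcases abs_cases ((w⁻¹ : Equiv.Perm ℤ) b) with ⟨he, _⟩ | ⟨he, _⟩ <;> omega
      · exact h1
    · intro a ha
      simp only [Finset.mem_Icc] at ha
      exact abs_inv_abs hw ha.1
    · intro b hb
      simp only [Finset.mem_Icc] at hb
      have h3 := abs_inv_abs (u := w⁻¹) ((signedPermGroup n).inv_mem hw) hb.1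
      rwa [inv_inv] at h3
    · intro a _; rfl
  rw [chi, Finset.prod_congr rfl key, Finset.prod_mul_distrib, hsnd, mul_comm]
  rfl

lemma chi_tgen {k : ℕ} (hk : k < n) (hn : 2 ≤ n) : chi n (tgen k) = 1 := by
  rcases eq_or_ne k 0 with rfl | hne
  · have hsplit : Finset.Icc (1 : ℤ) (n : ℤ) = insert 1 (insert 2 (Finset.Icc 3 (n : ℤ))) := by
      ext i; simp only [Finset.mem_Icc, Finset.mem_insert]; omega
    rw [chi, hsplit, Finset.prod_insert (by simp),
      Finset.prod_insert (by simp)]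
    have e1 : tgen 0 (1 : ℤ) = -2 := by rw [tgen_apply0]; norm_num
    have e2 : tgen 0 (2 : ℤ) = -1 := by rw [tgen_apply0]; norm_num
    rw [e1, e2]
    have e3 : ∏ i ∈ Finset.Icc (3 : ℤ) (n : ℤ), (if tgen 0 i < 0 then (-1 : ℤ) else 1) = 1 := by
      apply Finset.prod_eq_one
      intro i hi
      simp only [Finset.mem_Icc] at hi
      rw [tgen_apply0, if_neg]
      split_ifs <;> omega
    rw [e3]
    norm_num
  · apply Finset.prod_eq_one
    intro i hi
    simp only [Finset.mem_Icc] at hi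
    rw [if_neg]
    rw [show tgen k = sgen k by simp [tgen, hne], sgen_pos_sign k hne]
    omega

lemma closureD_le (hn : 2 ≤ n) :
    Subgroup.closure (tgen '' {i | i < n}) ≤ signedPermGroup n := by
  rw [Subgroup.closure_le]
  rintro _ ⟨k, hk, rfl⟩
  exact tgen_mem hk hn

lemma closureB_le : Subgroup.closure (sgen '' {i | i < n}) ≤ signedPermGroup n := by
  rw [Subgroup.closure_le]
  rintro _ ⟨k, hk, rfl⟩
  exact sgen_mem hk

lemma chi_closure (hn : 2 ≤ n) {g : Equiv.Perm ℤ}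
    (hg : g ∈ Subgroup.closure (tgen '' {i | i < n})) : chi n g = 1 := by
  induction hg using Subgroup.closure_induction with
  | mem x hx => obtain ⟨k, hk, rfl⟩ := hx; exact chi_tgen hk hn
  | one => exact chi_one
  | mul x y hx hy px py =>
    rw [chi_mul (closureD_le hn hx) (closureD_le hn hy), px, py]; ring
  | inv x hx px =>
    have h1 := chi_mul (closureD_le hn hx) (closureD_le hn ((Subgroup.inv_mem _ hx)))
    rw [mul_inv_cancel, chi_one, px, one_mul] at h1
    exact h1.symm

lemma even_negCount (hn : 2 ≤ n) {g : Equiv.Perm ℤ}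
    (hg : g ∈ Subgroup.closure (tgen '' {i | i < n})) : Even (negCount n g) := by
  have := chi_closure hn hg
  rw [chi_eq_pow] at this
  exact (neg_one_pow_eq_one_iff_even (by norm_num)).mp this

section Words

variable {S : Set (Equiv.Perm ℤ)} {g : Equiv.Perm ℤ}

lemma exists_word (hinv : ∀ a ∈ S, a⁻¹ ∈ S) (hg : g ∈ Subgroup.closure S) :
    ∃ l : List (Equiv.Perm ℤ), (∀ x ∈ l, x ∈ S) ∧ l.prod = g := by
  have h1 : g ∈ Submonoid.closure (S ∪ S⁻¹) := by
    rw [← Subgroup.closure_toSubmonoid]; exact hg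
  have h2 : S ∪ S⁻¹ = S := by
    apply Set.union_eq_self_of_subset_right
    intro a ha
    rw [Set.mem_inv] at ha
    have := hinv a⁻¹ ha
    rwa [inv_inv] at this
  rw [h2] at h1
  exact Submonoid.exists_list_of_mem_closure h1

lemma wl_le {l : List (Equiv.Perm ℤ)} (hl : ∀ x ∈ l, x ∈ S) (hp : l.prod = g) :
    wordLength S g ≤ l.length :=
  Nat.sInf_le ⟨l, hl, rfl, hp⟩

lemma wl_spec (hinv : ∀ a ∈ S, a⁻¹ ∈ S) (hg : g ∈ Subgroup.closure S) :
    ∃ l : List (Equiv.Perm ℤ), (∀ x ∈ l, x ∈ S) ∧ l.length = wordLength S g ∧ l.prod = g := by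
  obtain ⟨l, h1, h2⟩ := exists_word hinv hg
  have hne : {k | ∃ l : List (Equiv.Perm ℤ), (∀ x ∈ l, x ∈ S) ∧ l.length = k ∧
      l.prod = g}.Nonempty := ⟨l.length, l, h1, rfl, h2⟩
  obtain ⟨l', h1', h2', h3'⟩ := Nat.sInf_mem hne
  exact ⟨l', h1', h2', h3'⟩

end Words

lemma hinvB {n : ℕ} : ∀ a ∈ sgen '' {i | i < n}, a⁻¹ ∈ sgen '' {i | i < n} := by
  rintro _ ⟨k, hk, rfl⟩
  rw [inv_sgen]
  exact ⟨k, hk, rfl⟩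

lemma hinvD {n : ℕ} : ∀ a ∈ tgen '' {i | i < n}, a⁻¹ ∈ tgen '' {i | i < n} := by
  rintro _ ⟨k, hk, rfl⟩
  rw [inv_tgen]
  exact ⟨k, hk, rfl⟩

lemma word_bound_B (hn : 1 ≤ n) :
    ∀ l : List (Equiv.Perm ℤ), (∀ x ∈ l, x ∈ sgen '' {i | i < n}) →
      phiB n (l.prod)⁻¹ ≤ l.length := by
  intro l
  induction l with
  | nil =>
    intro _
    simp only [List.prod_nil, inv_one, List.length_nil]
    unfold phiB
    rw [phiD_one, negCount_one]
  | cons a l ih =>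
    intro h
    obtain ⟨k, hk, hek⟩ := h a (List.mem_cons_self)
    have hl : ∀ x ∈ l, x ∈ sgen '' {i | i < n} := fun x hx => h x (List.mem_cons_of_mem _ hx)
    have hplmem : l.prod ∈ signedPermGroup n := by
      apply list_prod_mem
      intro x hx
      obtain ⟨j, hj, hej⟩ := hl x hx
      rw [← hej]
      exact sgen_mem hj
    have hmem : (l.prod)⁻¹ ∈ signedPermGroup n := (signedPermGroup n).inv_mem hplmem
    have hle := ih hl
    rw [List.prod_cons, ← hek, mul_inv_rev, inv_sgen, List.length_cons]
    rcases eq_or_ne k 0 with rfl | hk0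
    · have hne : (l.prod)⁻¹ 1 ≠ 0 := apply_ne_zero hmem (by omega)
      have hd := phiB_mul_s0 hmem hn
      rcases lt_or_gt_of_ne hne with hx | hx
      · have := hd.2 hx; omega
      · have := hd.1 hx; omega
    · have hne : (l.prod)⁻¹ (k : ℤ) ≠ (l.prod)⁻¹ ((k : ℤ) + 1) :=
        fun he => absurd ((l.prod)⁻¹.injective he) (by omega)
      have hd := phiB_mul_sgen hmem hk0 hk
      rcases lt_or_gt_of_ne hne with hx | hx
      · have := hd.1 hx; omega
      · have := hd.2 hx; omega

lemma word_bound_D (hn : 2 ≤ n) :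
    ∀ l : List (Equiv.Perm ℤ), (∀ x ∈ l, x ∈ tgen '' {i | i < n}) →
      phiD n (l.prod)⁻¹ ≤ l.length := by
  intro l
  induction l with
  | nil =>
    intro _
    simp only [List.prod_nil, inv_one, List.length_nil]
    rw [phiD_one]
  | cons a l ih =>
    intro h
    obtain ⟨k, hk, hek⟩ := h a (List.mem_cons_self)
    have hl : ∀ x ∈ l, x ∈ tgen '' {i | i < n} := fun x hx => h x (List.mem_cons_of_mem _ hx)
    have hplmem : l.prod ∈ signedPermGroup n := by
      apply list_prod_mem
      intro x hx
      obtain ⟨j, hj, hej⟩ := hl x hx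
      rw [← hej]
      exact tgen_mem hj hn
    have hmem : (l.prod)⁻¹ ∈ signedPermGroup n := (signedPermGroup n).inv_mem hplmem
    have hle := ih hl
    rw [List.prod_cons, ← hek, mul_inv_rev, inv_tgen, List.length_cons]
    rcases eq_or_ne k 0 with rfl | hk0
    · have hne : (l.prod)⁻¹ 1 + (l.prod)⁻¹ 2 ≠ 0 := sum_ne_zero hmem (by omega)
      have hd := phiD_mul_t0 hmem hn
      rcases lt_or_gt_of_ne hne with hx | hx
      · have := hd.2 hx; omega
      · have := hd.1 (by omega); omega
    · have hne : (l.prod)⁻¹ (k : ℤ) ≠ (l.prod)⁻¹ ((k : ℤ) + 1) :=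
        fun he => absurd ((l.prod)⁻¹.injective he) (by omega)
      have hd := phiD_mul_sgen hmem hk0 hk
      rw [show tgen k = sgen k by simp [tgen, hk0]]
      rcases lt_or_gt_of_ne hne with hx | hx
      · have := hd.1 hx; omega
      · have := hd.2 hx; omega

lemma lenB_le (hn : 1 ≤ n) :
    ∀ m : ℕ, ∀ g : Equiv.Perm ℤ, g ∈ Subgroup.closure (sgen '' {i | i < n}) →
      phiB n g⁻¹ = m → wordLength (sgen '' {i | i < n}) g ≤ m := by
  intro m
  induction m using Nat.strong_induction_on with
  | _ m ih =>
    intro g hg hm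
    rcases eq_or_ne g 1 with rfl | hg1
    · have h0 : wordLength (sgen '' {i | i < n}) (1 : Equiv.Perm ℤ) ≤ 0 :=
        wl_le (l := []) (by simp) (by simp)
      omega
    · have hginv : g⁻¹ ∈ signedPermGroup n :=
        closureB_le ((Subgroup.closure (sgen '' {i | i < n})).inv_mem hg)
      have h0 : phiB n g⁻¹ ≠ 0 := by
        intro h
        exact hg1 (inv_injective (by rw [phiB_zero_eq_one hginv h, inv_one]))
      obtain ⟨k, hkn, hdes⟩ := exists_descent_B hginv hn h0
      have hgen : sgen k ∈ sgen '' {i | i < n} := ⟨k, hkn, rfl⟩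
      have hg' : sgen k * g ∈ Subgroup.closure (sgen '' {i | i < n}) :=
        mul_mem (Subgroup.subset_closure hgen) hg
      have hinv' : (sgen k * g)⁻¹ = g⁻¹ * sgen k := by rw [mul_inv_rev, inv_sgen]
      have hlt : phiB n (sgen k * g)⁻¹ < m := by rw [hinv']; omega
      have hle := ih _ hlt (sgen k * g) hg' rfl
      obtain ⟨l, hl1, hl2, hl3⟩ := wl_spec hinvB hg'
      have hword : wordLength (sgen '' {i | i < n}) g ≤ (sgen k :: l).length := by
        apply wl_le
        · intro x hx
          rcases List.mem_cons.mp hx with rfl | hx'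
          · exact hgen
          · exact hl1 x hx'
        · rw [List.prod_cons, hl3, ← mul_assoc, sgen_mul_self, one_mul]
      rw [List.length_cons, hl2] at hword
      omega

lemma lenB_eq (hn : 1 ≤ n) {g : Equiv.Perm ℤ}
    (hg : g ∈ Subgroup.closure (sgen '' {i | i < n})) :
    wordLength (sgen '' {i | i < n}) g = phiB n g⁻¹ := by
  apply le_antisymm
  · exact lenB_le hn _ g hg rfl
  · obtain ⟨l, hl1, hl2, hl3⟩ := wl_spec hinvB hg
    have := word_bound_B hn l hl1
    rw [hl3] at this
    omega

lemma lenD_le (hn : 2 ≤ n) :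
    ∀ m : ℕ, ∀ g : Equiv.Perm ℤ, g ∈ Subgroup.closure (tgen '' {i | i < n}) →
      phiD n g⁻¹ = m → wordLength (tgen '' {i | i < n}) g ≤ m := by
  intro m
  induction m using Nat.strong_induction_on with
  | _ m ih =>
    intro g hg hm
    rcases eq_or_ne g 1 with rfl | hg1
    · have h0 : wordLength (tgen '' {i | i < n}) (1 : Equiv.Perm ℤ) ≤ 0 :=
        wl_le (l := []) (by simp) (by simp)
      omega
    · have hgi : g⁻¹ ∈ Subgroup.closure (tgen '' {i | i < n}) :=
        (Subgroup.closure (tgen '' {i | i < n})).inv_mem hg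
      have hginv : g⁻¹ ∈ signedPermGroup n := closureD_le hn hgi
      have h0 : phiD n g⁻¹ ≠ 0 := by
        intro h
        exact hg1 (inv_injective
          (by rw [phiD_zero_eq_one_even hginv (even_negCount hn hgi) h, inv_one]))
      obtain ⟨k, hkn, hdes⟩ := exists_descent_D hginv hn h0
      have hgen : tgen k ∈ tgen '' {i | i < n} := ⟨k, hkn, rfl⟩
      have hg' : tgen k * g ∈ Subgroup.closure (tgen '' {i | i < n}) :=
        mul_mem (Subgroup.subset_closure hgen) hg
      have hinv' : (tgen k * g)⁻¹ = g⁻¹ * tgen k := by rw [mul_inv_rev, inv_tgen]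
      have hlt : phiD n (tgen k * g)⁻¹ < m := by rw [hinv']; omega
      have hle := ih _ hlt (tgen k * g) hg' rfl
      obtain ⟨l, hl1, hl2, hl3⟩ := wl_spec hinvD hg'
      have hword : wordLength (tgen '' {i | i < n}) g ≤ (tgen k :: l).length := by
        apply wl_le
        · intro x hx
          rcases List.mem_cons.mp hx with rfl | hx'
          · exact hgen
          · exact hl1 x hx'
        · rw [List.prod_cons, hl3, ← mul_assoc, tgen_mul_self, one_mul]
      rw [List.length_cons, hl2] at hword
      omega

lemma lenD_eq (hn : 2 ≤ n) {g : Equiv.Perm ℤ}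
    (hg : g ∈ Subgroup.closure (tgen '' {i | i < n})) :
    wordLength (tgen '' {i | i < n}) g = phiD n g⁻¹ := by
  apply le_antisymm
  · exact lenD_le hn _ g hg rfl
  · obtain ⟨l, hl1, hl2, hl3⟩ := wl_spec hinvD hg
    have := word_bound_D hn l hl1
    rw [hl3] at this
    omega

lemma tgen_mem_closureB {n k : ℕ} (hk : k < n) (hn : 2 ≤ n) :
    tgen k ∈ Subgroup.closure (sgen '' {i | i < n}) := by
  have hm0 : (0 : ℕ) ∈ {i : ℕ | i < n} := by simp only [Set.mem_setOf_eq]; omega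
  have hm1 : (1 : ℕ) ∈ {i : ℕ | i < n} := by simp only [Set.mem_setOf_eq]; omega
  rcases eq_or_ne k 0 with rfl | hne
  · rw [show tgen 0 = sgen 0 * sgen 1 * sgen 0 from by simp [tgen]]
    exact mul_mem (mul_mem (Subgroup.subset_closure ⟨0, hm0, rfl⟩)
      (Subgroup.subset_closure ⟨1, hm1, rfl⟩))
      (Subgroup.subset_closure ⟨0, hm0, rfl⟩)
  · rw [show tgen k = sgen k from by simp [tgen, hne]]
    exact Subgroup.subset_closure ⟨k, hk, rfl⟩

lemma closureD_le_closureB {n : ℕ} (hn : 2 ≤ n) :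
    Subgroup.closure (tgen '' {i | i < n}) ≤ Subgroup.closure (sgen '' {i | i < n}) := by
  rw [Subgroup.closure_le]
  rintro _ ⟨k, hk, rfl⟩
  exact tgen_mem_closureB hk hn

end SPaux

open SPaux in
/-- Let `x ∈ W_{Dₙ}` have `t 0` as its unique left descent in `W_{Dₙ}`, and write
`x = t 0 * x'` with `ℓ_D x' = ℓ_D x - 1`.  If `s 0` is a left descent of `x'` in `W_{Bₙ}`,
then `s 1` is not a left descent of `s 0 * x'` in `W_{Bₙ}`, and consequently
`ℓ_B (s 0 * s 1 * s 0 * x') = ℓ_B (s 0 * x') + 2`. -/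
theorem lift_length_of_unique_t0_descent (n : ℕ) (hn : 2 ≤ n)
    (x x' : Equiv.Perm ℤ)
    (hx : x ∈ Subgroup.closure (tgen '' {i | i < n}))
    (hxx' : x = tgen 0 * x')
    (hlen : wordLength (tgen '' {i | i < n}) x' = wordLength (tgen '' {i | i < n}) x - 1)
    (huniq : ∀ i < n,
      (wordLength (tgen '' {i | i < n}) (tgen i * x) < wordLength (tgen '' {i | i < n}) x ↔
        i = 0))
    (hs0 : wordLength (sgen '' {i | i < n}) (sgen 0 * x') <
      wordLength (sgen '' {i | i < n}) x') :
    ¬ (wordLength (sgen '' {i | i < n}) (sgen 1 * (sgen 0 * x')) <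
        wordLength (sgen '' {i | i < n}) (sgen 0 * x')) ∧
    wordLength (sgen '' {i | i < n}) (sgen 0 * sgen 1 * sgen 0 * x') =
      wordLength (sgen '' {i | i < n}) (sgen 0 * x') + 2 := by
  have hn1 : 1 ≤ n := by omega
  have hm0 : (0 : ℕ) ∈ {i : ℕ | i < n} := by simp only [Set.mem_setOf_eq]; omega
  have hm1 : (1 : ℕ) ∈ {i : ℕ | i < n} := by simp only [Set.mem_setOf_eq]; omega
  have ht0x : tgen 0 * x = x' := by
    rw [hxx', ← mul_assoc, tgen_mul_self, one_mul]
  have hx'D : x' ∈ Subgroup.closure (tgen '' {i | i < n}) := by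
    rw [← ht0x]
    exact mul_mem (Subgroup.subset_closure ⟨0, hm0, rfl⟩) hx
  have hx'B : x' ∈ Subgroup.closure (sgen '' {i | i < n}) := closureD_le_closureB hn hx'D
  set w : Equiv.Perm ℤ := x'⁻¹ with hw
  have hwmem : w ∈ signedPermGroup n :=
    closureB_le ((Subgroup.closure (sgen '' {i | i < n})).inv_mem hx'B)
  -- step 1 : `0 < w 1 + w 2` from uniqueness of the `t 0` descent
  have ha : 0 < w 1 + w 2 := by
    have h1 := (huniq 0 (by omega)).mpr rfl
    rw [ht0x] at h1
    rw [lenD_eq hn hx'D, lenD_eq hn hx] at h1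
    rw [← hw] at h1
    have hxi : x⁻¹ = w * tgen 0 := by rw [hxx', mul_inv_rev, inv_tgen]
    rw [hxi] at h1
    have hsum : w 1 + w 2 ≠ 0 := sum_ne_zero hwmem (by omega)
    rcases lt_or_gt_of_ne hsum with hc | hc
    · have := (phiD_mul_t0 hwmem hn).2 hc
      omega
    · omega
  -- step 2 : `w 1 < 0` from the `s 0` descent of `x'`
  have hs0B : sgen 0 * x' ∈ Subgroup.closure (sgen '' {i | i < n}) :=
    mul_mem (Subgroup.subset_closure ⟨0, hm0, rfl⟩) hx'B
  have hs0inv : (sgen 0 * x')⁻¹ = w * sgen 0 := by rw [mul_inv_rev, inv_sgen]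
  have hb : w 1 < 0 := by
    rw [lenB_eq hn1 hs0B, lenB_eq hn1 hx'B, hs0inv, ← hw] at hs0
    have hne : w 1 ≠ 0 := apply_ne_zero hwmem (by omega)
    rcases lt_or_gt_of_ne hne with hc | hc
    · exact hc
    · have := (phiB_mul_s0 hwmem hn1).1 hc
      omega
  -- step 3 : the key `phiB` computations
  have hu : w * sgen 0 ∈ signedPermGroup n := mul_mem hwmem (sgen_mem (by omega))
  have hu1 : (w * sgen 0) 1 = -(w 1) := by
    rw [Equiv.Perm.mul_apply, sgen_apply0, ← hwmem.1 1]
    norm_num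
  have hu2 : (w * sgen 0) 2 = w 2 := by
    rw [Equiv.Perm.mul_apply, sgen_apply0]
    norm_num
  have hd1 := (phiB_mul_sgen hu (k := 1) one_ne_zero (by omega)).1
  simp only [Nat.cast_one] at hd1
  rw [show (1 : ℤ) + 1 = 2 by norm_num] at hd1
  rw [hu1, hu2] at hd1
  have hstep1 : phiB n ((w * sgen 0) * sgen 1) = phiB n (w * sgen 0) + 1 := hd1 (by omega)
  have hv : (w * sgen 0) * sgen 1 ∈ signedPermGroup n := mul_mem hu (sgen_mem (by omega))
  have hv1 : ((w * sgen 0) * sgen 1) 1 = w 2 := by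
    rw [Equiv.Perm.mul_apply, show sgen 1 (1 : ℤ) = 2 from by
      rw [sgen_apply 1 one_ne_zero]; norm_num, hu2]
  have hstep2 : phiB n (((w * sgen 0) * sgen 1) * sgen 0) =
      phiB n ((w * sgen 0) * sgen 1) + 1 :=
    (phiB_mul_s0 hv hn1).1 (by omega)
  -- memberships and inverses for the two goal elements
  have hs10B : sgen 1 * (sgen 0 * x') ∈ Subgroup.closure (sgen '' {i | i < n}) :=
    mul_mem (Subgroup.subset_closure ⟨1, hm1, rfl⟩) hs0B
  have hs10inv : (sgen 1 * (sgen 0 * x'))⁻¹ = (w * sgen 0) * sgen 1 := by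
    rw [mul_inv_rev, hs0inv, inv_sgen]
  have heB : sgen 0 * sgen 1 * sgen 0 * x' ∈ Subgroup.closure (sgen '' {i | i < n}) :=
    mul_mem (mul_mem (mul_mem (Subgroup.subset_closure ⟨0, hm0, rfl⟩)
      (Subgroup.subset_closure ⟨1, hm1, rfl⟩))
      (Subgroup.subset_closure ⟨0, hm0, rfl⟩)) hx'B
  have heinv : (sgen 0 * sgen 1 * sgen 0 * x')⁻¹ = ((w * sgen 0) * sgen 1) * sgen 0 := by
    simp only [mul_inv_rev, inv_sgen, ← hw, mul_assoc]
  constructor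
  · rw [lenB_eq hn1 hs10B, lenB_eq hn1 hs0B, hs10inv, hs0inv, hstep1]
    omega
  · rw [lenB_eq hn1 heB, lenB_eq hn1 hs0B, heinv, hs0inv, hstep2, hstep1]
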